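/- Let A be an additive commutative group, let φ : ℕ → (A →+ ℤ) be a family of group homomorphisms, let K : ℕ → A, let σ₀ : ℕ → ℤ, and let ε : ℕ → ℕ → ℤ with ε l m = 1 ∨ ε l m = −1 for all l, m. Assume that for all l, m : ℕ: if m < l then φ l (K m) = σ₀ l, and if m ≥ l then φ l (K m) = σ₀ l + 2 * ε l m. If the set {l : ℕ | σ₀ l ≠ 0} is infinite, then the family K is linearly independent over ℤ: for every finitely supported function α : ℕ →₀ ℤ with ∑ m in α.support, α m • K m = 0, one has α = 0. -/

import Mathlib

/-- The abstract linear-independence argument behind Theorem 1.4: a family of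
elements detected by signature-like homomorphisms as stated is linearly
independent over `ℤ`. -/
theorem stmt18 {A : Type*} [AddCommGroup A] (φ : ℕ → A →+ ℤ) (K : ℕ → A)
    (σ₀ : ℕ → ℤ) (ε : ℕ → ℕ → ℤ)
    (hε : ∀ l m : ℕ, ε l m = 1 ∨ ε l m = -1)
    (h1 : ∀ l m : ℕ, m < l → φ l (K m) = σ₀ l)
    (h2 : ∀ l m : ℕ, l ≤ m → φ l (K m) = σ₀ l + 2 * ε l m)
    (hinf : {l : ℕ | σ₀ l ≠ 0}.Infinite) :
    ∀ α : ℕ →₀ ℤ, (∑ m ∈ α.support, α m • K m) = 0 → α = 0 := by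
  intro α hα
  have hsum : ∀ l, ∑ m ∈ α.support, α m * φ l (K m) = 0 := by
    intro l
    have := congrArg (φ l) hα
    simpa [map_sum, smul_eq_mul] using this
  -- Step 1: total sum of coefficients is 0
  have hS : ∑ m ∈ α.support, α m = 0 := by
    obtain ⟨l, hl0, hlgt⟩ : ∃ l, σ₀ l ≠ 0 ∧ ∀ m ∈ α.support, m < l := by
      obtain ⟨l, hl, hlt⟩ := hinf.exists_gt (α.support.sup id)
      exact ⟨l, hl, fun m hm => lt_of_le_of_lt (Finset.le_sup (f := id) hm) hlt⟩
    have := hsum l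
    rw [Finset.sum_congr rfl (fun m hm => by rw [h1 l m (hlgt m hm)]),
      ← Finset.sum_mul] at this
    exact (mul_eq_zero.mp this).resolve_right hl0
  -- Step 2: show α = 0
  by_contra hne
  have hsupp : α.support.Nonempty := Finsupp.support_nonempty_iff.mpr hne
  set n := α.support.max' hsupp with hn
  have hnmem : n ∈ α.support := α.support.max'_mem hsupp
  have hkey : ∀ m ∈ α.support,
      α m * φ n (K m) = α m * σ₀ n + (if m = n then 2 * ε n n * α n else 0) := by
    intro m hm
    rcases eq_or_lt_of_le (α.support.le_max' m hm) with h | h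
    · rw [← hn] at h
      subst h
      rw [h2 n n le_rfl]
      simp [mul_add]
      ring
    · rw [h1 n m h]
      simp [Nat.ne_of_lt (show m < n from h)]
  have := hsum n
  rw [Finset.sum_congr rfl hkey, Finset.sum_add_distrib, ← Finset.sum_mul, hS,
    Finset.sum_ite_eq' α.support n (fun _ => 2 * ε n n * α n)] at this
  simp [hnmem] at this
  rcases hε n n with h | h <;> rw [h] at this <;> simp at this <;>
    exact (Finsupp.mem_support_iff.mp hnmem) this
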